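/- For any probability measure μ⁰ on a finite state space S, uncertainty level ρ ∈ [0,1], and function V : S → [0, H], the infimum over μ ∈ Δ(S) with D_TV(μ‖μ⁰) ≤ ρ of E_{s∼μ}[V(s)] equals max over α ∈ [V_min, V_max] of ( E_{s∼μ⁰}[min(V(s), α)] − ρ(α − min_{s'} min(V(s'), α)) ), where V_min = min_s V(s) and V_max = max_s V(s). -/
import Mathlib

open Finset

lemma tv_weak_duality {S : Type*} [Fintype S]
    (ρ : ℝ) (hρ0 : 0 ≤ ρ)
    (μ μ0 V : S → ℝ) (hμ : ∀ s, 0 ≤ μ s)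
    (hsum : ∑ s, μ s = ∑ s, μ0 s)
    (htv : ∑ s, |μ s - μ0 s| ≤ 2 * ρ)
    (α v0 : ℝ) (hv0 : ∀ s, v0 ≤ V s) (hα : v0 ≤ α) :
    (∑ s, μ0 s * min (V s) α) - ρ * (α - v0) ≤ ∑ s, μ s * V s := by
  have key : ∀ s, |(μ s - μ0 s) * (min (V s) α - (v0 + α)/2)|
      ≤ |μ s - μ0 s| * ((α - v0)/2) := by
    intro s
    rw [abs_mul]
    refine mul_le_mul_of_nonneg_left ?_ (abs_nonneg _)
    have h1 : v0 ≤ min (V s) α := le_min (hv0 s) hα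
    have h2 : min (V s) α ≤ α := min_le_right _ _
    rw [abs_le]
    constructor <;> linarith
  have hsum2 : ∑ s, (μ s - μ0 s) * (min (V s) α - (v0 + α)/2)
      = (∑ s, μ s * min (V s) α) - ∑ s, μ0 s * min (V s) α := by
    have h : ∀ s ∈ Finset.univ, (μ s - μ0 s) * (min (V s) α - (v0 + α)/2)
        = (μ s * min (V s) α - μ0 s * min (V s) α) - ((v0 + α)/2) * (μ s - μ0 s) :=
      fun s _ => by ring
    rw [Finset.sum_congr rfl h, Finset.sum_sub_distrib, Finset.sum_sub_distrib,
      ← Finset.mul_sum, Finset.sum_sub_distrib, hsum]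
    ring
  have habs : |∑ s, (μ s - μ0 s) * (min (V s) α - (v0 + α)/2)| ≤ ρ * (α - v0) := by
    calc |∑ s, (μ s - μ0 s) * (min (V s) α - (v0 + α)/2)|
        ≤ ∑ s, |(μ s - μ0 s) * (min (V s) α - (v0 + α)/2)| :=
          Finset.abs_sum_le_sum_abs _ _
      _ ≤ ∑ s, |μ s - μ0 s| * ((α - v0)/2) := Finset.sum_le_sum fun s _ => key s
      _ = (∑ s, |μ s - μ0 s|) * ((α - v0)/2) := (Finset.sum_mul _ _ _).symm
      _ ≤ (2*ρ) * ((α - v0)/2) := mul_le_mul_of_nonneg_right htv (by linarith)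
      _ = ρ * (α - v0) := by ring
  have h3 : ∑ s, μ s * min (V s) α ≤ ∑ s, μ s * V s :=
    Finset.sum_le_sum fun s _ => mul_le_mul_of_nonneg_left (min_le_left _ _) (hμ s)
  have h4 := (abs_le.mp habs).1
  rw [hsum2] at h4
  linarith

theorem tv_duality_general {S : Type*} [Fintype S] [Nonempty S]
    (H ρ : ℝ) (hH : 0 < H) (hρ0 : 0 ≤ ρ) (hρ1 : ρ ≤ 1)
    (μ0 : S → ℝ) (hμ0 : ∀ s, 0 ≤ μ0 s) (hμ0sum : ∑ s, μ0 s = 1)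
    (V : S → ℝ) (hV0 : ∀ s, 0 ≤ V s) (hVH : ∀ s, V s ≤ H) :
    sInf {x : ℝ | ∃ μ : S → ℝ, (∀ s, 0 ≤ μ s) ∧ (∑ s, μ s = 1) ∧
        (1/2) * (∑ s, |μ s - μ0 s|) ≤ ρ ∧ x = ∑ s, μ s * V s}
      = sSup {y : ℝ | ∃ α : ℝ, (⨅ s, V s) ≤ α ∧ α ≤ (⨆ s, V s) ∧
        y = (∑ s, μ0 s * min (V s) α)
            - ρ * (α - ⨅ s', min (V s') α)} := by
  classical
  obtain ⟨s0, hs0⟩ := Finite.exists_min V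
  obtain ⟨sM, hsM⟩ := Finite.exists_max V
  have hVmin : (⨅ s, V s) = V s0 :=
    le_antisymm (ciInf_le (Finite.bddBelow_range V) s0) (le_ciInf hs0)
  have hVmax : (⨆ s, V s) = V sM :=
    le_antisymm (ciSup_le hsM) (le_ciSup (Finite.bddAbove_range V) sM)
  have hinfmin : ∀ α : ℝ, V s0 ≤ α → (⨅ s', min (V s') α) = V s0 := by
    intro α hα
    refine le_antisymm ?_ (le_ciInf fun s => le_min (hs0 s) hα)
    calc (⨅ s', min (V s') α) ≤ min (V s0) α := ciInf_le (Finite.bddBelow_range _) s0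
      _ = V s0 := min_eq_left hα
  set L : Set ℝ := {x : ℝ | ∃ μ : S → ℝ, (∀ s, 0 ≤ μ s) ∧ (∑ s, μ s = 1) ∧
        (1/2) * (∑ s, |μ s - μ0 s|) ≤ ρ ∧ x = ∑ s, μ s * V s} with hLdef
  set R : Set ℝ := {y : ℝ | ∃ α : ℝ, (⨅ s, V s) ≤ α ∧ α ≤ (⨆ s, V s) ∧
        y = (∑ s, μ0 s * min (V s) α)
            - ρ * (α - ⨅ s', min (V s') α)} with hRdef
  have hLne : L.Nonempty := ⟨∑ s, μ0 s * V s, μ0, hμ0, hμ0sum, by simpa using hρ0, rfl⟩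
  have hweak : ∀ x ∈ L, ∀ y ∈ R, y ≤ x := by
    rintro x ⟨μ, hμ, hμsum, hμtv, rfl⟩ y ⟨β, hβ1, hβ2, rfl⟩
    rw [hVmin] at hβ1
    rw [hinfmin β hβ1]
    exact tv_weak_duality ρ hρ0 μ μ0 V hμ (hμsum.trans hμ0sum.symm)
      (by linarith) β (V s0) hs0 hβ1
  have hmain : ∃ x y : ℝ, x ∈ L ∧ y ∈ R ∧ x = y := by
    by_cases hG : ∑ s ∈ Finset.univ.filter (fun s => V s0 < V s), μ0 s ≤ ρ
    · -- Case 1: can move all mass above the minimum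
      set G := ∑ s ∈ Finset.univ.filter (fun s => V s0 < V s), μ0 s with hGdef
      have hG0 : 0 ≤ G := Finset.sum_nonneg fun s _ => hμ0 s
      set ν : S → ℝ := fun s => (if V s0 < V s then 0 else μ0 s) + (if s = s0 then G else 0)
        with hνdef
      have hsplit : ∑ s, μ0 s
          = G + ∑ s ∈ Finset.univ.filter (fun s => ¬ V s0 < V s), μ0 s :=
        (Finset.sum_filter_add_sum_filter_not Finset.univ _ μ0).symm
      have hrest : ∑ s ∈ Finset.univ.filter (fun s => ¬ V s0 < V s), μ0 s = 1 - G := by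
        linarith [hsplit, hμ0sum]
      have hν0 : ∀ s, 0 ≤ ν s := by
        intro s
        have := hμ0 s
        simp only [hνdef]
        split_ifs <;> linarith
      have hν1 : ∑ s, ν s = 1 := by
        have h : ∀ s ∈ Finset.univ, ν s
            = (if ¬ V s0 < V s then μ0 s else 0) + (if s = s0 then G else 0) := by
          intro s _
          simp only [hνdef]
          by_cases h : V s0 < V s <;> simp [h]
        rw [Finset.sum_congr rfl h, Finset.sum_add_distrib, ← Finset.sum_filter,
          Finset.sum_ite_eq' Finset.univ s0 (fun _ => G), hrest]
        simp only [Finset.mem_univ, if_true]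
        ring
      have hνtv : (1/2) * (∑ s, |ν s - μ0 s|) ≤ ρ := by
        have h : ∀ s ∈ Finset.univ, |ν s - μ0 s|
            = (if V s0 < V s then μ0 s else 0) + (if s = s0 then G else 0) := by
          intro s _
          simp only [hνdef]
          by_cases hs : s = s0
          · simp [hs, abs_of_nonneg hG0]
          · by_cases h : V s0 < V s
            · simp only [if_pos h, if_neg hs, add_zero, zero_add, zero_sub, abs_neg]
              rw [abs_of_nonneg (hμ0 s)]
            · simp [h, hs]
        rw [Finset.sum_congr rfl h, Finset.sum_add_distrib, ← Finset.sum_filter,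
          Finset.sum_ite_eq' Finset.univ s0 (fun _ => G)]
        simp only [Finset.mem_univ, if_true]
        rw [← hGdef]
        linarith
      have hνval : ∑ s, ν s * V s = V s0 := by
        have h : ∀ s ∈ Finset.univ, ν s * V s
            = (if ¬ V s0 < V s then μ0 s * V s0 else 0) + (if s = s0 then G * V s0 else 0) := by
          intro s _
          simp only [hνdef]
          by_cases h : V s0 < V s
          · have hs : s ≠ s0 := fun he => absurd (he ▸ h) (lt_irrefl _)
            simp [h, hs]
          · have he : V s = V s0 := le_antisymm (not_lt.mp h) (hs0 s)
            by_cases hs : s = s0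
            · rw [if_neg h, if_pos h, if_pos hs, if_pos hs, he]
              ring
            · rw [if_neg h, if_pos h, if_neg hs, if_neg hs, he]
              ring
        rw [Finset.sum_congr rfl h, Finset.sum_add_distrib, ← Finset.sum_filter,
          Finset.sum_ite_eq' Finset.univ s0 (fun _ => G * V s0), ← Finset.sum_mul, hrest]
        simp only [Finset.mem_univ, if_true]
        ring
      refine ⟨V s0, V s0, ⟨ν, hν0, hν1, hνtv, hνval.symm⟩, ⟨V s0, ?_, ?_, ?_⟩, rfl⟩
      · rw [hVmin]
      · rw [hVmax]; exact hs0 sM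
      · rw [hinfmin (V s0) le_rfl]
        have h : ∀ s ∈ Finset.univ, μ0 s * min (V s) (V s0) = μ0 s * V s0 :=
          fun s _ => by rw [min_eq_right (hs0 s)]
        rw [Finset.sum_congr rfl h, ← Finset.sum_mul, hμ0sum]
        ring
    · -- Case 2: threshold construction
      push_neg at hG
      set T : Finset ℝ := (Finset.univ.image V).filter
        (fun v => ∑ s ∈ Finset.univ.filter (fun s => v < V s), μ0 s ≤ ρ) with hTdef
      have hTne : T.Nonempty := by
        refine ⟨V sM, Finset.mem_filter.mpr
          ⟨Finset.mem_image_of_mem V (Finset.mem_univ sM), ?_⟩⟩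
        have he : Finset.univ.filter (fun s => V sM < V s) = ∅ :=
          Finset.filter_eq_empty_iff.mpr fun s _ => not_lt.mpr (hsM s)
        rw [he, Finset.sum_empty]
        exact hρ0
      set α := T.min' hTne with hαdef
      obtain ⟨hαim, hgα⟩ := Finset.mem_filter.mp (T.min'_mem hTne)
      rw [← hαdef] at hαim hgα
      obtain ⟨sα, _, hsα⟩ := Finset.mem_image.mp hαim
      have hαmin : V s0 ≤ α := by rw [← hsα]; exact hs0 sα
      have hαmax : α ≤ V sM := by rw [← hsα]; exact hsM sα
      have hs0α : V s0 < α := by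
        rcases lt_or_eq_of_le hαmin with h | h
        · exact h
        · exfalso
          rw [← h] at hgα
          exact absurd hgα (not_le.mpr hG)
      have hP : ρ < ∑ s ∈ Finset.univ.filter (fun s => α ≤ V s), μ0 s := by
        set B := (Finset.univ.image V).filter (fun v => v < α) with hBdef
        have hBne : B.Nonempty :=
          ⟨V s0, Finset.mem_filter.mpr ⟨Finset.mem_image_of_mem V (Finset.mem_univ s0), hs0α⟩⟩
        have hv'mem := Finset.mem_filter.mp (B.max'_mem hBne)
        have hv'lt : B.max' hBne < α := hv'mem.2
        have hv'nT : B.max' hBne ∉ T := fun hmem => absurd (T.min'_le _ hmem) (not_le.mpr hv'lt)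
        have hgv' : ρ < ∑ s ∈ Finset.univ.filter (fun s => B.max' hBne < V s), μ0 s := by
          by_contra hc
          push_neg at hc
          exact hv'nT (Finset.mem_filter.mpr ⟨hv'mem.1, hc⟩)
        refine lt_of_lt_of_le hgv'
          (Finset.sum_le_sum_of_subset_of_nonneg ?_ fun s _ _ => hμ0 s)
        intro s hs
        rw [Finset.mem_filter] at hs ⊢
        refine ⟨Finset.mem_univ s, ?_⟩
        by_contra hc
        push_neg at hc
        have hmemB : V s ∈ B :=
          Finset.mem_filter.mpr ⟨Finset.mem_image_of_mem V (Finset.mem_univ s), hc⟩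
        exact absurd (B.le_max' _ hmemB) (not_le.mpr hs.2)
      set g := ∑ s, (if α < V s then μ0 s else 0) with hgdef
      set m := ∑ s, (if V s = α then μ0 s else 0) with hmdef
      set Q := ∑ s, (if V s < α then μ0 s else 0) with hQdef
      set W := ∑ s, (if V s < α then μ0 s * V s else 0) with hWdef
      have hgα' : g ≤ ρ := by rw [hgdef, ← Finset.sum_filter]; exact hgα
      have hP' : ρ < m + g := by
        have hdec : ∑ s ∈ Finset.univ.filter (fun s => α ≤ V s), μ0 s = m + g := by
          rw [Finset.sum_filter, hmdef, hgdef, ← Finset.sum_add_distrib]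
          refine Finset.sum_congr rfl fun s _ => ?_
          rcases lt_trichotomy (V s) α with h | h | h
          · rw [if_neg (not_le.mpr h), if_neg h.ne, if_neg (not_lt.mpr h.le)]
            ring
          · rw [if_pos h.ge, if_pos h, if_neg (not_lt.mpr h.le)]
            ring
          · rw [if_pos h.le, if_neg h.ne', if_pos h]
            ring
        rw [hdec] at hP
        exact hP
      have hdecomp : g + m + Q = 1 := by
        rw [← hμ0sum, hgdef, hmdef, hQdef, ← Finset.sum_add_distrib, ← Finset.sum_add_distrib]
        refine Finset.sum_congr rfl fun s _ => ?_
        rcases lt_trichotomy (V s) α with h | h | h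
        · rw [if_neg (not_lt.mpr h.le), if_neg h.ne, if_pos h]
          ring
        · rw [if_neg (not_lt.mpr h.le), if_pos h, if_neg (not_lt.mpr h.ge)]
          ring
        · rw [if_pos h, if_neg h.ne', if_neg (not_lt.mpr h.le)]
          ring
      have hm0 : 0 < m := by linarith
      set c := (ρ - g) / m with hcdef
      have hcm : c * m = ρ - g := div_mul_cancel₀ _ (ne_of_gt hm0)
      have hc0 : 0 ≤ c := div_nonneg (by linarith) hm0.le
      have hc1 : c ≤ 1 := by
        rw [hcdef, div_le_one hm0]
        linarith
      set ν : S → ℝ := fun s =>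
        (if α < V s then 0 else if V s = α then μ0 s * (1 - c) else μ0 s)
          + (if s = s0 then ρ else 0) with hνdef
      have hν0 : ∀ s, 0 ≤ ν s := by
        intro s
        have h1 := hμ0 s
        simp only [hνdef]
        apply add_nonneg
        · split_ifs
          · exact le_rfl
          · exact mul_nonneg h1 (by linarith)
          · exact h1
        · split_ifs
          · exact hρ0
          · exact le_rfl
      have hfacm : ∀ r : ℝ, ∑ s, (if V s = α then μ0 s * r else 0) = m * r := by
        intro r
        rw [hmdef, Finset.sum_mul]
        refine Finset.sum_congr rfl fun s _ => ?_
        split_ifs <;> ring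
      have hν1 : ∑ s, ν s = 1 := by
        have h : ∀ s ∈ Finset.univ, ν s
            = ((if V s = α then μ0 s * (1 - c) else 0) + (if V s < α then μ0 s else 0))
              + (if s = s0 then ρ else 0) := by
          intro s _
          simp only [hνdef]
          rcases lt_trichotomy (V s) α with h | h | h
          · rw [if_neg (not_lt.mpr h.le), if_neg h.ne, if_neg h.ne, if_pos h]
            ring
          · rw [if_neg (not_lt.mpr h.le), if_pos h, if_pos h, if_neg (not_lt.mpr h.ge)]
            ring
          · rw [if_pos h, if_neg h.ne', if_neg (not_lt.mpr h.le)]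
            ring
        rw [Finset.sum_congr rfl h, Finset.sum_add_distrib, Finset.sum_add_distrib,
          Finset.sum_ite_eq' Finset.univ s0 (fun _ => ρ), hfacm, ← hQdef]
        simp only [Finset.mem_univ, if_true]
        linear_combination hdecomp - hcm
      have hνtv : (1/2) * (∑ s, |ν s - μ0 s|) ≤ ρ := by
        have h : ∀ s ∈ Finset.univ, |ν s - μ0 s|
            = ((if α < V s then μ0 s else 0) + (if V s = α then μ0 s * c else 0))
              + (if s = s0 then ρ else 0) := by
          intro s _
          simp only [hνdef]
          by_cases hs : s = s0
          · have hlt : V s < α := by rw [hs]; exact hs0α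
            rw [if_neg (not_lt.mpr hlt.le), if_neg hlt.ne, if_neg (not_lt.mpr hlt.le),
              if_neg hlt.ne, if_pos hs]
            have h2 : μ0 s + ρ - μ0 s = ρ := by ring
            rw [h2, abs_of_nonneg hρ0]
            ring
          · rcases lt_trichotomy (V s) α with h | h | h
            · rw [if_neg (not_lt.mpr h.le), if_neg h.ne, if_neg (not_lt.mpr h.le),
                if_neg h.ne, if_neg hs]
              simp
            · rw [if_neg (not_lt.mpr h.le), if_pos h, if_neg (not_lt.mpr h.le),
                if_pos h, if_neg hs]
              have h2 : μ0 s * (1 - c) + 0 - μ0 s = -(μ0 s * c) := by ring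
              rw [h2, abs_neg, abs_of_nonneg (mul_nonneg (hμ0 s) hc0)]
              ring
            · rw [if_pos h, if_pos h, if_neg h.ne', if_neg hs]
              have h2 : (0:ℝ) + 0 - μ0 s = -(μ0 s) := by ring
              rw [h2, abs_neg, abs_of_nonneg (hμ0 s)]
              ring
        rw [Finset.sum_congr rfl h, Finset.sum_add_distrib, Finset.sum_add_distrib,
          Finset.sum_ite_eq' Finset.univ s0 (fun _ => ρ), hfacm, ← hgdef]
        simp only [Finset.mem_univ, if_true]
        linarith [hcm]
      have hνval : ∑ s, ν s * V s = m * ((1 - c) * α) + W + ρ * V s0 := by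
        have h : ∀ s ∈ Finset.univ, ν s * V s
            = ((if V s = α then μ0 s * ((1 - c) * α) else 0)
                + (if V s < α then μ0 s * V s else 0))
              + (if s = s0 then ρ * V s else 0) := by
          intro s _
          simp only [hνdef]
          by_cases hs : s = s0
          · have hlt : V s < α := by rw [hs]; exact hs0α
            rw [if_pos hs, if_pos hs, if_neg (not_lt.mpr hlt.le), if_neg hlt.ne,
              if_neg hlt.ne, if_pos hlt]
            ring
          · rw [if_neg hs, if_neg hs]
            rcases lt_trichotomy (V s) α with h | h | h
            · rw [if_neg (not_lt.mpr h.le), if_neg h.ne, if_neg h.ne, if_pos h]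
              ring
            · rw [if_neg (not_lt.mpr h.le), if_pos h, if_pos h, if_neg (not_lt.mpr h.ge), h]
              ring
            · rw [if_pos h, if_neg h.ne', if_neg (not_lt.mpr h.le)]
              ring
        have hfacm2 : ∑ s, (if V s = α then μ0 s * ((1 - c) * α) else 0) = m * ((1 - c) * α) :=
          hfacm _
        rw [Finset.sum_congr rfl h, Finset.sum_add_distrib, Finset.sum_add_distrib,
          Finset.sum_ite_eq' Finset.univ s0 (fun s => ρ * V s), hfacm2, ← hWdef]
        simp only [Finset.mem_univ, if_true]
      have hdual : ∑ s, μ0 s * min (V s) α = m * α + g * α + W := by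
        have h : ∀ s ∈ Finset.univ, μ0 s * min (V s) α
            = ((if V s = α then μ0 s * α else 0) + (if α < V s then μ0 s * α else 0))
              + (if V s < α then μ0 s * V s else 0) := by
          intro s _
          rcases lt_trichotomy (V s) α with h | h | h
          · rw [min_eq_left h.le, if_neg h.ne, if_neg (not_lt.mpr h.le), if_pos h]
            ring
          · rw [min_eq_left h.le, if_pos h, if_neg (not_lt.mpr h.le),
              if_neg (not_lt.mpr h.ge), h]
            ring
          · rw [min_eq_right h.le, if_neg h.ne', if_pos h, if_neg (not_lt.mpr h.le)]
            ring
        have hfacm3 : ∑ s, (if V s = α then μ0 s * α else 0) = m * α := hfacm _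
        have hfacg : ∑ s, (if α < V s then μ0 s * α else 0) = g * α := by
          rw [hgdef, Finset.sum_mul]
          refine Finset.sum_congr rfl fun s _ => ?_
          split_ifs <;> ring
        rw [Finset.sum_congr rfl h, Finset.sum_add_distrib, Finset.sum_add_distrib,
          hfacm3, hfacg, ← hWdef]
      refine ⟨∑ s, ν s * V s, (∑ s, μ0 s * min (V s) α) - ρ * (α - V s0),
        ⟨ν, hν0, hν1, hνtv, rfl⟩, ⟨α, ?_, ?_, ?_⟩, ?_⟩
      · rw [hVmin]; exact hαmin
      · rw [hVmax]; exact hαmax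
      · rw [hinfmin α hαmin]
      · rw [hνval, hdual]
        linear_combination (-α) * hcm
  obtain ⟨x, y, hxL, hyR, hxy⟩ := hmain
  have hRne : R.Nonempty := ⟨y, hyR⟩
  have hbddL : BddBelow L := by
    refine ⟨0, ?_⟩
    rintro x' ⟨μ, hμ, _, _, rfl⟩
    exact Finset.sum_nonneg fun s _ => mul_nonneg (hμ s) (hV0 s)
  have hbddR : BddAbove R := ⟨x, fun y' hy' => hweak x hxL y' hy'⟩
  have h1 : sSup R ≤ sInf L :=
    csSup_le hRne fun y' hy' => le_csInf hLne fun x' hx' => hweak x' hx' y' hy'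
  have h2 : sInf L ≤ x := csInf_le hbddL hxL
  have h3 : y ≤ sSup R := le_csSup hbddR hyR
  linarith
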